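/- Let 𝕂 be ℝ or ℂ, and let p < q be prime numbers. Let v be a 𝕂-analytic function defined on an open neighborhood N of 0 in 𝕂² all of whose partial derivatives of order < 2q vanish at 0. Then there exist open neighborhoods U ⊆ N and U' of 0 in 𝕂² and a bijective 𝕂-analytic map G : U → U' with G(0) = 0 whose inverse G^{−1} : U' → U is 𝕂-analytic, such that F_{p,q}(w) + v(w) = H_{p,q}(G(w)) for all w ∈ U, where H_{p,q}(x,y) = x^p − y^q and F_{p,q}(x,y) = x^p − y^q + x^{2q} + y^{2q}. (Lemma 2.2 / 'andiffeo'.) -/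

import Mathlib

noncomputable section

open Filter
open scoped ENNReal

/-- `ℝ^n` with the Euclidean norm. -/
abbrev En (n : ℕ) : Type := EuclideanSpace ℝ (Fin n)

/-- Evaluation of a real polynomial in `n` variables at a point of `ℝ^n`. -/
def pEval {n : ℕ} (P : MvPolynomial (Fin n) ℝ) (x : En n) : ℝ :=
  MvPolynomial.eval (fun i => x i) P

/-- `f` is regular on `A ⊆ ℝ^n`: at every point `a ∈ A` there are polynomials `φ, ψ`
with `ψ a ≠ 0` and `f = φ/ψ` on `A` off the zero set of `ψ`. -/
def IsRegularOn {n : ℕ} (A : Set (En n)) (f : En n → ℝ) : Prop :=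
  ∀ a ∈ A, ∃ φ ψ : MvPolynomial (Fin n) ℝ, pEval ψ a ≠ 0 ∧
    ∀ x ∈ A, pEval ψ x ≠ 0 → f x = pEval φ x / pEval ψ x

/-- An algebraic set in `ℝ^n`: the common zero set of a family of polynomials. -/
def IsAlgebraicSet {n : ℕ} (X : Set (En n)) : Prop :=
  ∃ S : Set (MvPolynomial (Fin n) ℝ), X = {x | ∀ P ∈ S, pEval P x = 0}

/-- A function on a subset `A` is real analytic if near every point of `A` it agrees
with a genuinely real analytic function defined on an open neighborhood. -/
def AnalyticOnSubset {EE : Type*} [NormedAddCommGroup EE] [NormedSpace ℝ EE]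
    (A : Set EE) (f : EE → ℝ) : Prop :=
  ∀ a ∈ A, ∃ U : Set EE, IsOpen U ∧ a ∈ U ∧
    ∃ G : EE → ℝ, AnalyticOnNhd ℝ G U ∧ ∀ x ∈ A ∩ U, G x = f x

/-- The ideal of polynomials vanishing on `X`. -/
def polyVanishingIdeal {n : ℕ} (X : Set (En n)) : Ideal (MvPolynomial (Fin n) ℝ) where
  carrier := {P | ∀ x ∈ X, pEval P x = 0}
  add_mem' := by
    intro a b ha hb x hx
    have h1 : pEval a x = 0 := ha x hx
    have h2 : pEval b x = 0 := hb x hx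
    simp only [pEval, map_add] at h1 h2 ⊢
    rw [h1, h2, add_zero]
  zero_mem' := by
    intro x hx
    simp [pEval]
  smul_mem' := by
    intro c P hP x hx
    have h1 : pEval P x = 0 := hP x hx
    simp only [pEval, smul_eq_mul, map_mul] at h1 ⊢
    rw [h1, mul_zero]

/-- A local presentation of `X` as a nonsingular set of dimension `d` at `a`:
polynomials `P i` vanishing on `X`, cutting out `X` near `a`, with linearly
independent gradients at `a`. -/
def IsLocalPresentation {n : ℕ} (X : Set (En n)) (d : ℕ) (a : En n)
    (Ω : Set (En n)) (P : Fin (n - d) → MvPolynomial (Fin n) ℝ) : Prop :=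
  IsOpen Ω ∧ a ∈ Ω ∧ (∀ i, ∀ x ∈ X, pEval (P i) x = 0) ∧
  X ∩ Ω = {x | x ∈ Ω ∧ ∀ i, pEval (P i) x = 0} ∧
  LinearIndependent ℝ (fun i => (fun j => pEval (MvPolynomial.pderiv j (P i)) a : Fin n → ℝ))

/-- `X` is nonsingular of dimension `d` at the point `a`. -/
def NonsingularAt {n : ℕ} (X : Set (En n)) (d : ℕ) (a : En n) : Prop :=
  ∃ Ω P, IsLocalPresentation X d a Ω P

/-- `X` is nonsingular of dimension `d`. -/
def IsNonsingularOfDim {n : ℕ} (X : Set (En n)) (d : ℕ) : Prop :=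
  ∀ a ∈ X, NonsingularAt X d a

/-- `Z` is faithful at `b`: every real analytic function vanishing on `Z` near `b` is,
near `b`, a finite combination `Σ ψᵢ · Pᵢ` with `Pᵢ` polynomials vanishing on `Z`
and `ψᵢ` real analytic. -/
def FaithfulAt {n : ℕ} (Z : Set (En n)) (b : En n) : Prop :=
  ∀ U : Set (En n), IsOpen U → b ∈ U →
    ∀ g : En n → ℝ, AnalyticOnNhd ℝ g U → (∀ x ∈ Z ∩ U, g x = 0) →
      ∃ V : Set (En n), IsOpen V ∧ b ∈ V ∧ V ⊆ U ∧
        ∃ (s : ℕ) (ψ : Fin s → En n → ℝ) (P : Fin s → MvPolynomial (Fin n) ℝ),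
          (∀ i, AnalyticOnNhd ℝ (ψ i) V) ∧ (∀ i, ∀ x ∈ Z, pEval (P i) x = 0) ∧
          ∀ x ∈ V, g x = ∑ i, ψ i x * pEval (P i) x

/-- `Z` is faithful if it is faithful at each of its points. -/
def IsFaithful {n : ℕ} (Z : Set (En n)) : Prop := ∀ b ∈ Z, FaithfulAt Z b

/-- The model curve `D_{p,q} = {x^p - y^q = 0, z₁ = ⋯ = z_{m-2} = 0} ⊆ ℝ^m`. -/
def Dpq (m p q : ℕ) : Set (En m) :=
  {y | (∀ h1 : 1 < m, (y ⟨0, Nat.lt_of_succ_lt h1⟩) ^ p - (y ⟨1, h1⟩) ^ q = 0) ∧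
       ∀ i : Fin m, 2 ≤ (i : ℕ) → y i = 0}

/-- `C` is a `(p,q)`-curve in `X` (with `dim X = m`) with singular point `a`. -/
def IsPqCurve {n : ℕ} (X : Set (En n)) (m p q : ℕ) (C : Set (En n)) (a : En n) : Prop :=
  IsAlgebraicSet C ∧ C ⊆ X ∧ a ∈ C ∧ ¬ NonsingularAt C 1 a ∧
  (∀ b ∈ C, b ≠ a → NonsingularAt C 1 b) ∧ FaithfulAt C a ∧
  ∃ (O : Set (En n)) (W : Set (En m)) (σ : En n → En m) (τ : En m → En n),
    IsOpen O ∧ a ∈ O ∧ IsOpen W ∧ (0 : En m) ∈ W ∧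
    AnalyticOnNhd ℝ σ O ∧ AnalyticOnNhd ℝ τ W ∧ σ a = 0 ∧
    Set.BijOn σ (X ∩ O) W ∧ (∀ x ∈ X ∩ O, τ (σ x) = x) ∧
    σ '' (C ∩ O) = Dpq m p q ∩ W

/-- A Euclidean `d`-sphere in `ℝ^n`. -/
def IsEuclideanSphere {n : ℕ} (d : ℕ) (S : Set (En n)) : Prop :=
  ∃ (Q : AffineSubspace ℝ (En n)) (x₀ : En n) (r : ℝ),
    Module.finrank ℝ Q.direction = d + 1 ∧ x₀ ∈ Q ∧ 0 < r ∧
    S = {x | ‖x - x₀‖ = r} ∩ (Q : Set (En n))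

/-- `F_{p,q}(x,y) = x^p - y^q + x^{2q} + y^{2q}`. -/
def Fpq (p q : ℕ) (w : ℝ × ℝ) : ℝ := w.1 ^ p - w.2 ^ q + w.1 ^ (2 * q) + w.2 ^ (2 * q)

/-- `C_{p,q}`, the zero set of `F_{p,q}` in `ℝ²`. -/
def Cpq (p q : ℕ) : Set (ℝ × ℝ) := {w | Fpq p q w = 0}

/-- `H_{p,q}(x,y) = x^p - y^q`. -/
def Hpq (p q : ℕ) (w : ℝ × ℝ) : ℝ := w.1 ^ p - w.2 ^ q

/-- `E_{p,q}`, the zero set of `H_{p,q}` in `ℝ²`. -/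
def Epq (p q : ℕ) : Set (ℝ × ℝ) := {w | Hpq p q w = 0}

/-- The collection `𝒢^k(ℝ^n)`: curves affinely equivalent (inside an affine 2-plane)
to a translate of `C_{p,q}` with `p < q` primes, `pk < q`. -/
def InGk {n : ℕ} (k : ℕ) (C : Set (En n)) : Prop :=
  ∃ (Q : AffineSubspace ℝ (En n)) (φ : En n →ᵃ[ℝ] ℝ × ℝ) (p q : ℕ) (ab : ℝ × ℝ),
    Module.finrank ℝ Q.direction = 2 ∧ C ⊆ (Q : Set (En n)) ∧
    Set.BijOn φ (Q : Set (En n)) Set.univ ∧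
    p.Prime ∧ q.Prime ∧ p < q ∧ p * k < q ∧
    φ '' C = (fun z => ab + z) '' Cpq p q

/-- The collection `𝓗^k(ℝ^n)`: curves affinely equivalent (inside an affine 2-plane)
to a translate of `E_{p,q}` with `p < q` primes, `pk < q`. -/
def InHk {n : ℕ} (k : ℕ) (C : Set (En n)) : Prop :=
  ∃ (Q : AffineSubspace ℝ (En n)) (φ : En n →ᵃ[ℝ] ℝ × ℝ) (p q : ℕ) (ab : ℝ × ℝ),
    Module.finrank ℝ Q.direction = 2 ∧ C ⊆ (Q : Set (En n)) ∧
    Set.BijOn φ (Q : Set (En n)) Set.univ ∧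
    p.Prime ∧ q.Prime ∧ p < q ∧ p * k < q ∧
    φ '' C = (fun z => ab + z) '' Epq p q

/-- The unit circle in `ℝ²`. -/
def unitCircle2 : Set (ℝ × ℝ) := {w | w.1 ^ 2 + w.2 ^ 2 = 1}

/-- The unit 2-sphere in `ℝ³`. -/
def unitSphere2 : Set (En 3) := {u | ‖u‖ = 1}

/-- `F_{p,q}` as a polynomial in two variables. -/
def FpqPoly (p q : ℕ) : MvPolynomial (Fin 2) ℝ :=
  MvPolynomial.X 0 ^ p - MvPolynomial.X 1 ^ q +
    MvPolynomial.X 0 ^ (2 * q) + MvPolynomial.X 1 ^ (2 * q)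

/-- The curve `C_{p,q}` as a subset of the Euclidean plane `ℝ²`. -/
def CpqE (p q : ℕ) : Set (En 2) := {x | pEval (FpqPoly p q) x = 0}


/-- `F_{p,q}` over an arbitrary field `𝕂`. -/
def FpqK (𝕂 : Type*) [Field 𝕂] (p q : ℕ) (w : 𝕂 × 𝕂) : 𝕂 :=
  w.1 ^ p - w.2 ^ q + w.1 ^ (2 * q) + w.2 ^ (2 * q)


section AuxAndiffeo
open scoped NNReal
variable {𝕂 : Type} [RCLike 𝕂]


lemma exists_kth_root (k : ℕ) (hk : 0 < k) :
    ∃ (rk : 𝕂 → 𝕂) (V : Set 𝕂), IsOpen V ∧ (1:𝕂) ∈ V ∧ (∀ z ∈ V, AnalyticAt 𝕂 rk z) ∧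
      rk 1 = 1 ∧ ∀ z ∈ V, (rk z) ^ k = z := by
  set f : 𝕂 → 𝕂 := fun z => z ^ k with hf
  have hA : AnalyticAt 𝕂 f 1 := (analyticAt_id).pow k
  have hc : ((k : 𝕂)) ≠ 0 := Nat.cast_ne_zero.2 hk.ne'
  set e : 𝕂 ≃L[𝕂] 𝕂 := ContinuousLinearEquiv.unitsEquivAut 𝕂 (Units.mk0 (k:𝕂) hc) with he
  have hd : HasFDerivAt f (e : 𝕂 →L[𝕂] 𝕂) 1 := by
    have h1 : HasDerivAt f ((k:𝕂) * 1 ^ (k-1)) 1 := hasDerivAt_pow k 1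
    have h2 : HasDerivAt f ((k:𝕂)) 1 := by simpa using h1
    have := h2.hasFDerivAt
    convert this using 1
    ext
    simp [he]
  have hstrict : HasStrictFDerivAt f (e : 𝕂 →L[𝕂] 𝕂) 1 :=
    (hA.contDiffAt (n := 1)).hasStrictFDerivAt' hd one_ne_zero
  set Φ := hstrict.toOpenPartialHomeomorph f with hΦ
  have hcoe : ⇑Φ = f := rfl
  have hsrc : (1:𝕂) ∈ Φ.source := hstrict.mem_toOpenPartialHomeomorph_source
  have hΦ1 : Φ 1 = 1 := by simp [hcoe, hf]
  have hsymm1 : AnalyticAt 𝕂 Φ.symm 1 := by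
    have h := Φ.analyticAt_symm' (i := e) hsrc (by rwa [hcoe]) (hd.fderiv)
    rwa [hΦ1] at h
  refine ⟨Φ.symm, Φ.target ∩ {z | AnalyticAt 𝕂 Φ.symm z}, ?_, ?_, ?_, ?_, ?_⟩
  · exact Φ.open_target.inter (isOpen_analyticAt 𝕂 _)
  · refine ⟨?_, hsymm1⟩
    have := hstrict.image_mem_toOpenPartialHomeomorph_target
    rwa [show f 1 = 1 by simp [hf]] at this
  · exact fun z hz => hz.2
  · have := Φ.left_inv hsrc
    rwa [hΦ1] at this
  · intro z hz
    have h1 : Φ (Φ.symm z) = z := Φ.right_inv hz.1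
    rw [hcoe] at h1
    exact h1


/-- Monomial continuous multilinear map on `(𝕂 × 𝕂)^m`: product of first coordinates of the
first `k` arguments and second coordinates of the rest. -/
noncomputable def LamM (𝕂 : Type) [RCLike 𝕂] (m k : ℕ) :
    ContinuousMultilinearMap 𝕂 (fun _ : Fin m => 𝕂 × 𝕂) 𝕂 :=
  (ContinuousMultilinearMap.mkPiAlgebra 𝕂 (Fin m) 𝕂).compContinuousLinearMap
    (fun i => if (i : ℕ) < k then ContinuousLinearMap.fst 𝕂 𝕂 𝕂 else ContinuousLinearMap.snd 𝕂 𝕂 𝕂)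

lemma card_filter_lt_fin (m k : ℕ) (hk : k ≤ m) :
    ((Finset.univ : Finset (Fin m)).filter (fun i : Fin m => (i : ℕ) < k)).card = k := by
  classical
  have h : ∀ a ∈ Finset.range k, a < m := fun a ha =>
    lt_of_lt_of_le (Finset.mem_range.1 ha) hk
  have : ((Finset.univ : Finset (Fin m)).filter (fun i : Fin m => (i : ℕ) < k))
      = (Finset.range k).attachFin h := by
    ext i
    simp [Finset.mem_attachFin, Finset.mem_range]
  rw [this, Finset.card_attachFin, Finset.card_range]

lemma LamM_apply_diag (m k : ℕ) (hk : k ≤ m) (w : 𝕂 × 𝕂) :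
    LamM 𝕂 m k (fun _ => w) = w.1 ^ k * w.2 ^ (m - k) := by
  classical
  rw [LamM, ContinuousMultilinearMap.compContinuousLinearMap_apply,
    ContinuousMultilinearMap.mkPiAlgebra_apply]
  have h1 : ∀ i : Fin m,
      (if (i : ℕ) < k then ContinuousLinearMap.fst 𝕂 𝕂 𝕂 else ContinuousLinearMap.snd 𝕂 𝕂 𝕂) w
        = (if (i : ℕ) < k then w.1 else w.2) := by
    intro i; split <;> rfl
  rw [Finset.prod_congr rfl fun i _ => h1 i, Finset.prod_ite (fun _ => w.1) (fun _ => w.2),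
    Finset.prod_const, Finset.prod_const, card_filter_lt_fin m k hk]
  congr 2
  have h2 := Finset.card_filter_add_card_filter_not
    (s := (Finset.univ : Finset (Fin m))) (p := fun i : Fin m => (i : ℕ) < k)
  rw [card_filter_lt_fin m k hk] at h2
  simp only [Finset.card_univ, Fintype.card_fin] at h2
  omega

lemma norm_LamM_le (m k : ℕ) : ‖LamM 𝕂 m k‖ ≤ 1 := by
  refine le_trans (ContinuousMultilinearMap.norm_compContinuousLinearMap_le _ _) ?_
  have h1 : ‖ContinuousMultilinearMap.mkPiAlgebra 𝕂 (Fin m) 𝕂‖ = 1 :=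
    ContinuousMultilinearMap.norm_mkPiAlgebra
  rw [h1, one_mul]
  refine Finset.prod_le_one (fun i _ => norm_nonneg _) (fun i _ => ?_)
  split
  · exact ContinuousLinearMap.opNorm_le_bound _ zero_le_one
      (fun w => by simpa using norm_fst_le w)
  · exact ContinuousLinearMap.opNorm_le_bound _ zero_le_one
      (fun w => by simpa using norm_snd_le w)

lemma split_lemma (p q : ℕ) (hp : 0 < p) (hpq : p < q) (v : 𝕂 × 𝕂 → 𝕂)
    (hv : AnalyticAt 𝕂 v 0) (hord : ∀ i < 2 * q, iteratedFDeriv 𝕂 i v 0 = 0) :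
    ∃ (A B : 𝕂 × 𝕂 → 𝕂) (δ : ℝ), 0 < δ ∧
      (∀ w : 𝕂 × 𝕂, ‖w‖ < δ → AnalyticAt 𝕂 A w) ∧
      (∀ w : 𝕂 × 𝕂, ‖w‖ < δ → AnalyticAt 𝕂 B w) ∧
      A 0 = 0 ∧ B 0 = 0 ∧
      ∀ w : 𝕂 × 𝕂, ‖w‖ < δ → v w = w.1 ^ p * A w + w.2 ^ q * B w := by
  classical
  obtain ⟨s, r, hsr⟩ := hv
  -- the modified series, with vanishing low-order terms
  set s' : FormalMultilinearSeries 𝕂 (𝕂 × 𝕂) 𝕂 :=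
    fun n => if n < 2 * q then 0 else s n with hs'def
  have hnorm_le : ∀ n, ‖s' n‖ ≤ ‖s n‖ := by
    intro n; by_cases h : n < 2 * q <;> simp [hs'def, h]
  have hzero : ∀ n, n < 2 * q → s' n = 0 := fun n hn => by simp [hs'def, hn]
  have hradius : s.radius ≤ s'.radius := by
    refine ENNReal.le_of_forall_nnreal_lt fun ρ hρ => ?_
    obtain ⟨C, -, hC⟩ := s.norm_mul_pow_le_of_lt_radius hρ
    exact s'.le_radius_of_bound C fun n =>
      le_trans (mul_le_mul_of_nonneg_right (hnorm_le n) (by positivity)) (hC n)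
  have hdiag : ∀ n, n < 2 * q → ∀ y : 𝕂 × 𝕂, s n (fun _ => y) = 0 := by
    intro n hn y
    have h1 := hsr.factorial_smul y n
    rw [hord n hn] at h1
    simp only [ContinuousMultilinearMap.zero_apply] at h1
    have h2 : ((n.factorial : ℕ) : 𝕂) * (s n fun _ => y) = 0 := by
      rw [← nsmul_eq_mul]; exact h1
    rcases mul_eq_zero.1 h2 with h | h
    · exact absurd h (by exact_mod_cast Nat.factorial_ne_zero n)
    · exact h
  have hs' : HasFPowerSeriesOnBall v s' 0 r := by
    refine ⟨le_trans hsr.r_le hradius, hsr.r_pos, fun {y} hy => ?_⟩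
    have h := hsr.hasSum hy
    convert h using 1
    funext n
    by_cases hn : n < 2 * q
    · rw [hzero n hn, hdiag n hn y]; simp
    · simp [hs'def, hn]
  -- choose a radius with coefficient bounds
  have hrad_pos : (0 : ℝ≥0∞) < s'.radius := lt_of_lt_of_le hsr.r_pos (le_trans hsr.r_le hradius)
  obtain ⟨ρ, hρ0, hρlt⟩ := ENNReal.lt_iff_exists_nnreal_btwn.1 hrad_pos
  obtain ⟨C, hCpos, hC⟩ := s'.norm_mul_pow_le_of_lt_radius hρlt
  have hρR : (0 : ℝ) < (ρ : ℝ) := by exact_mod_cast ENNReal.coe_pos.1 hρ0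
  -- coefficients
  set a : ∀ n : ℕ, Finset (Fin n) → 𝕂 := fun n S =>
    s' n (fun i => if i ∈ S then ((1 : 𝕂), (0 : 𝕂)) else ((0 : 𝕂), (1 : 𝕂))) with hadef
  have ha_norm : ∀ n (S : Finset (Fin n)), ‖a n S‖ ≤ ‖s' n‖ := by
    intro n S
    refine le_trans ((s' n).le_opNorm _) ?_
    have h1 : ∀ i : Fin n,
        ‖if i ∈ S then ((1 : 𝕂), (0 : 𝕂)) else ((0 : 𝕂), (1 : 𝕂))‖ = 1 := by
      intro i; split <;> simp [Prod.norm_def]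
    rw [Finset.prod_congr rfl fun i _ => h1 i]
    simp
  have ha0 : ∀ n, n < 2 * q → ∀ S : Finset (Fin n), a n S = 0 := by
    intro n hn S
    rw [hadef]
    simp only [hzero n hn, ContinuousMultilinearMap.zero_apply]
  -- the two series
  set t : FormalMultilinearSeries 𝕂 (𝕂 × 𝕂) 𝕂 := fun m =>
    ∑ S : Finset (Fin (m + p)),
      (if p ≤ S.card then a (m + p) S else 0) • LamM 𝕂 m (S.card - p) with htdef
  set u : FormalMultilinearSeries 𝕂 (𝕂 × 𝕂) 𝕂 := fun m =>
    ∑ S : Finset (Fin (m + q)),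
      (if S.card < p then a (m + q) S else 0) • LamM 𝕂 m S.card with hudef
  have hcard : ∀ n : ℕ, ∀ S : Finset (Fin n), S.card ≤ n := by
    intro n S
    have := Finset.card_le_univ S
    simpa using this
  -- norm bounds
  have ht_norm : ∀ m, ‖t m‖ ≤ 2 ^ (m + p) * ‖s' (m + p)‖ := by
    intro m
    refine le_trans (norm_sum_le _ _) ?_
    have h1 : ∀ S : Finset (Fin (m + p)),
        ‖(if p ≤ S.card then a (m + p) S else 0) • LamM 𝕂 m (S.card - p)‖ ≤ ‖s' (m + p)‖ := by
      intro S
      refine le_trans (ContinuousMultilinearMap.opNorm_smul_le _ _) ?_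
      have h2 : ‖if p ≤ S.card then a (m + p) S else 0‖ ≤ ‖s' (m + p)‖ := by
        split
        · exact ha_norm _ _
        · simp
      calc ‖if p ≤ S.card then a (m + p) S else 0‖ * ‖LamM 𝕂 m (S.card - p)‖
          ≤ ‖s' (m + p)‖ * 1 := mul_le_mul h2 (norm_LamM_le m _) (norm_nonneg _) (norm_nonneg _)
        _ = ‖s' (m + p)‖ := mul_one _
    refine le_trans (Finset.sum_le_sum fun S _ => h1 S) ?_
    rw [Finset.sum_const, Finset.card_univ, Fintype.card_finset, Fintype.card_fin,
      nsmul_eq_mul]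
    push_cast
    exact le_refl _
  have hu_norm : ∀ m, ‖u m‖ ≤ 2 ^ (m + q) * ‖s' (m + q)‖ := by
    intro m
    refine le_trans (norm_sum_le _ _) ?_
    have h1 : ∀ S : Finset (Fin (m + q)),
        ‖(if S.card < p then a (m + q) S else 0) • LamM 𝕂 m S.card‖ ≤ ‖s' (m + q)‖ := by
      intro S
      refine le_trans (ContinuousMultilinearMap.opNorm_smul_le _ _) ?_
      have h2 : ‖if S.card < p then a (m + q) S else 0‖ ≤ ‖s' (m + q)‖ := by
        split
        · exact ha_norm _ _
        · simp
      calc ‖if S.card < p then a (m + q) S else 0‖ * ‖LamM 𝕂 m S.card‖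
          ≤ ‖s' (m + q)‖ * 1 := mul_le_mul h2 (norm_LamM_le m _) (norm_nonneg _) (norm_nonneg _)
        _ = ‖s' (m + q)‖ := mul_one _
    refine le_trans (Finset.sum_le_sum fun S _ => h1 S) ?_
    rw [Finset.sum_const, Finset.card_univ, Fintype.card_finset, Fintype.card_fin,
      nsmul_eq_mul]
    push_cast
    exact le_refl _
  -- radius bounds
  have hradbound : ∀ (k : ℕ) (w : FormalMultilinearSeries 𝕂 (𝕂 × 𝕂) 𝕂),
      (∀ m, ‖w m‖ ≤ 2 ^ (m + k) * ‖s' (m + k)‖) → ((ρ / 2 : ℝ≥0) : ℝ≥0∞) ≤ w.radius := by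
    intro k w hw
    refine w.le_radius_of_bound (C * 2 ^ k / (ρ : ℝ) ^ k) fun m => ?_
    have hcoe : ((ρ / 2 : ℝ≥0) : ℝ) = (ρ : ℝ) / 2 := by
      push_cast; ring
    have h1 : ‖w m‖ * ((ρ / 2 : ℝ≥0) : ℝ) ^ m ≤ (2 : ℝ) ^ (m + k) * ‖s' (m + k)‖ * ((ρ : ℝ) / 2) ^ m := by
      rw [hcoe]
      exact mul_le_mul_of_nonneg_right (hw m) (by positivity)
    refine le_trans h1 ?_
    have heq : (2 : ℝ) ^ (m + k) * ‖s' (m + k)‖ * ((ρ : ℝ) / 2) ^ m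
        = (2 ^ k / (ρ : ℝ) ^ k) * (‖s' (m + k)‖ * (ρ : ℝ) ^ (m + k)) := by
      rw [div_pow, pow_add, pow_add]
      field_simp
    rw [heq]
    calc (2 ^ k / (ρ : ℝ) ^ k) * (‖s' (m + k)‖ * (ρ : ℝ) ^ (m + k))
        ≤ (2 ^ k / (ρ : ℝ) ^ k) * C :=
          mul_le_mul_of_nonneg_left (hC (m + k)) (by positivity)
      _ = C * 2 ^ k / (ρ : ℝ) ^ k := by ring
  have htrad := hradbound p t ht_norm
  have hurad := hradbound q u hu_norm
  have hhalf_pos : (0 : ℝ≥0∞) < ((ρ / 2 : ℝ≥0) : ℝ≥0∞) := by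
    rw [ENNReal.coe_pos]
    have : (0 : ℝ≥0) < ρ := ENNReal.coe_pos.1 hρ0
    positivity
  have htpos : (0 : ℝ≥0∞) < t.radius := lt_of_lt_of_le hhalf_pos htrad
  have hupos : (0 : ℝ≥0∞) < u.radius := lt_of_lt_of_le hhalf_pos hurad
  -- choose δ
  obtain ⟨δ₁, hδ₁0, hδ₁r⟩ := ENNReal.lt_iff_exists_nnreal_btwn.1 hsr.r_pos
  set δ : ℝ := min (δ₁ : ℝ) ((ρ : ℝ) / 2) with hδdef
  have hδ₁R : (0 : ℝ) < (δ₁ : ℝ) := by exact_mod_cast ENNReal.coe_pos.1 hδ₁0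
  have hδpos : 0 < δ := lt_min hδ₁R (by positivity)
  have hmem : ∀ (R : ℝ≥0∞) (δ' : ℝ≥0), ((δ' : ℝ≥0∞) ≤ R) → ∀ w : 𝕂 × 𝕂, ‖w‖ < (δ' : ℝ) →
      w ∈ Metric.eball (0 : 𝕂 × 𝕂) R := by
    intro R δ' hle w hw
    rw [mem_emetric_ball_zero_iff]
    refine lt_of_lt_of_le ?_ hle
    rw [enorm_eq_nnnorm, ENNReal.coe_lt_coe, ← NNReal.coe_lt_coe, coe_nnnorm]
    exact hw
  have hcoe2 : ((ρ / 2 : ℝ≥0) : ℝ) = (ρ : ℝ) / 2 := by push_cast; ring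
  have hmemr : ∀ w : 𝕂 × 𝕂, ‖w‖ < δ → w ∈ Metric.eball (0 : 𝕂 × 𝕂) r :=
    fun w hw => hmem r δ₁ (le_of_lt hδ₁r) w (lt_of_lt_of_le hw (min_le_left _ _))
  have hmemt : ∀ w : 𝕂 × 𝕂, ‖w‖ < δ → w ∈ Metric.eball (0 : 𝕂 × 𝕂) t.radius :=
    fun w hw => hmem t.radius (ρ / 2) htrad w
      (by rw [hcoe2]; exact lt_of_lt_of_le hw (min_le_right _ _))
  have hmemu : ∀ w : 𝕂 × 𝕂, ‖w‖ < δ → w ∈ Metric.eball (0 : 𝕂 × 𝕂) u.radius :=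
    fun w hw => hmem u.radius (ρ / 2) hurad w
      (by rw [hcoe2]; exact lt_of_lt_of_le hw (min_le_right _ _))
  -- the splitting identity for each w
  have hkey : ∀ w : 𝕂 × 𝕂, ‖w‖ < δ → v w = w.1 ^ p * t.sum w + w.2 ^ q * u.sum w := by
    intro w hw
    -- expansion of the diagonal coefficients
    have hFsplit : ∀ n : ℕ, (s' n fun _ => w)
        = ∑ S : Finset (Fin n), a n S * w.1 ^ S.card * w.2 ^ (n - S.card) := by
      intro n
      have h0 : (s' n fun _ => w) = ∑ S : Finset (Fin n),
          s' n (S.piecewise (fun _ => (w.1, (0 : 𝕂))) (fun _ => ((0 : 𝕂), w.2))) := by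
        rw [← ContinuousMultilinearMap.map_add_univ]
        congr 1
        funext i
        show w = (w.1, (0 : 𝕂)) + ((0 : 𝕂), w.2)
        simp [Prod.ext_iff]
      rw [h0]
      refine Finset.sum_congr rfl fun S _ => ?_
      have h1 : S.piecewise (fun _ => (w.1, (0 : 𝕂))) (fun _ => ((0 : 𝕂), w.2))
          = fun i => (if i ∈ S then w.1 else w.2) •
              (if i ∈ S then ((1 : 𝕂), (0 : 𝕂)) else ((0 : 𝕂), (1 : 𝕂))) := by
        funext i
        by_cases h : i ∈ S
        · simp [Finset.piecewise_eq_of_mem _ _ _ h, h, Prod.ext_iff]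
        · simp [Finset.piecewise_eq_of_notMem _ _ _ h, h, Prod.ext_iff]
      rw [h1, (s' n).map_smul_univ]
      rw [Finset.prod_ite (fun _ => w.1) (fun _ => w.2), Finset.prod_const, Finset.prod_const]
      have hfS : Finset.univ.filter (fun i : Fin n => i ∈ S) = S := by
        ext i; simp
      have hcards : (Finset.univ.filter (fun i : Fin n => ¬ i ∈ S)).card = n - S.card := by
        have h2 := Finset.card_filter_add_card_filter_not
          (s := (Finset.univ : Finset (Fin n))) (p := fun i : Fin n => i ∈ S)
        rw [hfS] at h2
        simp only [Finset.card_univ, Fintype.card_fin] at h2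
        omega
      rw [hfS, hcards, smul_eq_mul]
      ring
    -- per-term identities
    have e1 : ∀ m, w.1 ^ p * (t m fun _ => w)
        = ∑ S ∈ Finset.univ.filter (fun S : Finset (Fin (m + p)) => p ≤ S.card),
            a (m + p) S * w.1 ^ S.card * w.2 ^ ((m + p) - S.card) := by
      intro m
      rw [htdef]
      simp only [ContinuousMultilinearMap.sum_apply, ContinuousMultilinearMap.smul_apply,
        smul_eq_mul]
      rw [Finset.mul_sum, Finset.sum_filter]
      refine Finset.sum_congr rfl fun S _ => ?_
      by_cases h : p ≤ S.card
      · rw [if_pos h, if_pos h]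
        have hSc : S.card ≤ m + p := hcard _ S
        rw [LamM_apply_diag m (S.card - p) (by omega) w]
        have hx : w.1 ^ p * w.1 ^ (S.card - p) = w.1 ^ S.card := by
          rw [← pow_add]; congr 1; omega
        have hy : m - (S.card - p) = (m + p) - S.card := by omega
        rw [hy]
        calc w.1 ^ p * (a (m + p) S * (w.1 ^ (S.card - p) * w.2 ^ ((m + p) - S.card)))
            = a (m + p) S * (w.1 ^ p * w.1 ^ (S.card - p)) * w.2 ^ ((m + p) - S.card) := by ring
          _ = a (m + p) S * w.1 ^ S.card * w.2 ^ ((m + p) - S.card) := by rw [hx]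
      · rw [if_neg h, if_neg h, zero_mul, mul_zero]
    have e2 : ∀ m, w.2 ^ q * (u m fun _ => w)
        = ∑ S ∈ Finset.univ.filter (fun S : Finset (Fin (m + q)) => ¬ p ≤ S.card),
            a (m + q) S * w.1 ^ S.card * w.2 ^ ((m + q) - S.card) := by
      intro m
      rw [hudef]
      simp only [ContinuousMultilinearMap.sum_apply, ContinuousMultilinearMap.smul_apply,
        smul_eq_mul]
      rw [Finset.mul_sum, Finset.sum_filter]
      refine Finset.sum_congr rfl fun S _ => ?_
      by_cases h : S.card < p
      · rw [if_pos h, if_pos (by omega : ¬ p ≤ S.card)]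
        by_cases hSm : S.card ≤ m
        · rw [LamM_apply_diag m S.card hSm w]
          have hy : w.2 ^ q * w.2 ^ (m - S.card) = w.2 ^ ((m + q) - S.card) := by
            rw [← pow_add]; congr 1; omega
          calc w.2 ^ q * (a (m + q) S * (w.1 ^ S.card * w.2 ^ (m - S.card)))
              = a (m + q) S * w.1 ^ S.card * (w.2 ^ q * w.2 ^ (m - S.card)) := by ring
            _ = a (m + q) S * w.1 ^ S.card * w.2 ^ ((m + q) - S.card) := by rw [hy]
        · have hm : m + q < 2 * q := by omega
          rw [ha0 _ hm S]
          simp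
      · rw [if_neg h, if_neg (by omega : ¬ ¬ p ≤ S.card), zero_mul, mul_zero]
    -- define the two pieces
    set fA : ℕ → 𝕂 := fun n =>
      ∑ S ∈ Finset.univ.filter (fun S : Finset (Fin n) => p ≤ S.card),
        a n S * w.1 ^ S.card * w.2 ^ (n - S.card) with hfAdef
    set fB : ℕ → 𝕂 := fun n =>
      ∑ S ∈ Finset.univ.filter (fun S : Finset (Fin n) => ¬ p ≤ S.card),
        a n S * w.1 ^ S.card * w.2 ^ (n - S.card) with hfBdef
    have hfA0 : ∀ n, n < p → fA n = 0 := by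
      intro n hn
      rw [hfAdef]
      refine Finset.sum_eq_zero fun S hS => ?_
      rw [Finset.mem_filter] at hS
      have : S.card ≤ n := hcard n S
      omega
    have hfB0 : ∀ n, n < q → fB n = 0 := by
      intro n hn
      refine Finset.sum_eq_zero fun S hS => ?_
      rw [ha0 n (by omega) S]
      ring
    -- HasSum statements
    have hsumt : HasSum (fun m => t m fun _ => w) (t.sum w) := t.hasSum (hmemt w hw)
    have hsumu : HasSum (fun m => u m fun _ => w) (u.sum w) := u.hasSum (hmemu w hw)
    have hA1 : HasSum (fun m => fA (m + p)) (w.1 ^ p * t.sum w) := by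
      have h := hsumt.mul_left (w.1 ^ p)
      have heq : (fun m => w.1 ^ p * (t m fun _ => w)) = fun m => fA (m + p) := funext e1
      rwa [heq] at h
    have hB1 : HasSum (fun m => fB (m + q)) (w.2 ^ q * u.sum w) := by
      have h := hsumu.mul_left (w.2 ^ q)
      have heq : (fun m => w.2 ^ q * (u m fun _ => w)) = fun m => fB (m + q) := funext e2
      rwa [heq] at h
    have hA2 : HasSum fA (w.1 ^ p * t.sum w) := by
      refine (hasSum_nat_add_iff' p).1 ?_
      have hz : ∑ i ∈ Finset.range p, fA i = 0 :=
        Finset.sum_eq_zero fun i hi => hfA0 i (Finset.mem_range.1 hi)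
      rwa [hz, sub_zero]
    have hB2 : HasSum fB (w.2 ^ q * u.sum w) := by
      refine (hasSum_nat_add_iff' q).1 ?_
      have hz : ∑ i ∈ Finset.range q, fB i = 0 :=
        Finset.sum_eq_zero fun i hi => hfB0 i (Finset.mem_range.1 hi)
      rwa [hz, sub_zero]
    have hsumv : HasSum (fun n => s' n fun _ => w) (v w) := by
      have h := hs'.hasSum (hmemr w hw)
      simpa using h
    have hsplitfun : (fun n => s' n fun _ => w) = fun n => fA n + fB n := by
      funext n
      rw [hFsplit n, hfAdef, hfBdef]
      exact (Finset.sum_filter_add_sum_filter_not _ _ _).symm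
    rw [hsplitfun] at hsumv
    exact hsumv.unique (hA2.add hB2)
  -- values at zero
  have hnorm0 : ‖(0 : 𝕂 × 𝕂)‖ < δ := by simpa using hδpos
  have hA0 : t.sum 0 = 0 := by
    have hsum0 : HasSum (fun m => t m fun _ => (0 : 𝕂 × 𝕂)) (t.sum 0) := t.hasSum (hmemt 0 hnorm0)
    have hzt : ∀ m, (t m fun _ => (0 : 𝕂 × 𝕂)) = 0 := by
      intro m
      cases m with
      | zero =>
        have hz : ∀ S : Finset (Fin (0 + p)), a (0 + p) S = 0 :=
          fun S => ha0 _ (by omega) S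
        rw [htdef]
        simp [hz]
      | succ m =>
        have : (fun _ : Fin (m + 1) => (0 : 𝕂 × 𝕂)) = 0 := rfl
        rw [this, (t (m + 1)).map_zero]
    rw [funext hzt] at hsum0
    exact hsum0.unique hasSum_zero
  have hB0 : u.sum 0 = 0 := by
    have hsum0 : HasSum (fun m => u m fun _ => (0 : 𝕂 × 𝕂)) (u.sum 0) := u.hasSum (hmemu 0 hnorm0)
    have hzt : ∀ m, (u m fun _ => (0 : 𝕂 × 𝕂)) = 0 := by
      intro m
      cases m with
      | zero =>
        have hz : ∀ S : Finset (Fin (0 + q)), a (0 + q) S = 0 :=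
          fun S => ha0 _ (by omega) S
        rw [hudef]
        simp [hz]
      | succ m =>
        have : (fun _ : Fin (m + 1) => (0 : 𝕂 × 𝕂)) = 0 := rfl
        rw [this, (u (m + 1)).map_zero]
    rw [funext hzt] at hsum0
    exact hsum0.unique hasSum_zero
  -- analyticity
  have hAan : ∀ w : 𝕂 × 𝕂, ‖w‖ < δ → AnalyticAt 𝕂 t.sum w := fun w hw =>
    (t.hasFPowerSeriesOnBall htpos).analyticOnNhd w (hmemt w hw)
  have hBan : ∀ w : 𝕂 × 𝕂, ‖w‖ < δ → AnalyticAt 𝕂 u.sum w := fun w hw =>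
    (u.hasFPowerSeriesOnBall hupos).analyticOnNhd w (hmemu w hw)
  exact ⟨t.sum, u.sum, δ, hδpos, hAan, hBan, hA0, hB0, hkey⟩

end AuxAndiffeo

/-- Lemma `andiffeo`. -/
theorem lem_andiffeo {𝕂 : Type} [RCLike 𝕂] {p q : ℕ} (hp : p.Prime) (hq : q.Prime)
    (hpq : p < q) (N : Set (𝕂 × 𝕂)) (hN : IsOpen N) (h0 : (0 : 𝕂 × 𝕂) ∈ N)
    (v : 𝕂 × 𝕂 → 𝕂) (hv : AnalyticOnNhd 𝕂 v N)
    (hord : ∀ i < 2 * q, iteratedFDeriv 𝕂 i v 0 = 0) :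
    ∃ (U U' : Set (𝕂 × 𝕂)) (G Ginv : 𝕂 × 𝕂 → 𝕂 × 𝕂),
      IsOpen U ∧ IsOpen U' ∧ (0 : 𝕂 × 𝕂) ∈ U ∧ (0 : 𝕂 × 𝕂) ∈ U' ∧ U ⊆ N ∧
      AnalyticOnNhd 𝕂 G U ∧ AnalyticOnNhd 𝕂 Ginv U' ∧ G 0 = 0 ∧
      Set.BijOn G U U' ∧ (∀ w ∈ U, Ginv (G w) = w) ∧
      ∀ w ∈ U, FpqK 𝕂 p q w + v w = (G w).1 ^ p - (G w).2 ^ q := by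
  classical
  have hvan : AnalyticAt 𝕂 v 0 := hv 0 h0
  obtain ⟨A, B, δ, hδpos, hAan, hBan, hA0, hB0, hid⟩ :=
    split_lemma p q hp.pos hpq v hvan hord
  obtain ⟨rp, Vp, hVpo, hVp1, hrpan, hrp1, hrp⟩ := exists_kth_root (𝕂 := 𝕂) p hp.pos
  obtain ⟨rq, Vq, hVqo, hVq1, hrqan, hrq1, hrq⟩ := exists_kth_root (𝕂 := 𝕂) q hq.pos
  set c1 : 𝕂 × 𝕂 → 𝕂 := fun w => 1 + w.1 ^ (2 * q - p) + A w with hc1def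
  set c2 : 𝕂 × 𝕂 → 𝕂 := fun w => 1 - w.2 ^ q - B w with hc2def
  set G : 𝕂 × 𝕂 → 𝕂 × 𝕂 := fun w => (w.1 * rp (c1 w), w.2 * rq (c2 w)) with hGdef
  have hc10 : c1 0 = 1 := by
    rw [hc1def]
    simp [hA0, zero_pow (by omega : 2 * q - p ≠ 0)]
  have hc20 : c2 0 = 1 := by
    rw [hc2def]
    simp [hB0, zero_pow (by omega : q ≠ 0)]
  have hc1an : ∀ w : 𝕂 × 𝕂, ‖w‖ < δ → AnalyticAt 𝕂 c1 w := fun w hw =>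
    (analyticAt_const.add (analyticAt_fst.pow _)).add (hAan w hw)
  have hc2an : ∀ w : 𝕂 × 𝕂, ‖w‖ < δ → AnalyticAt 𝕂 c2 w := fun w hw =>
    (analyticAt_const.sub (analyticAt_snd.pow _)).sub (hBan w hw)
  set T : Set (𝕂 × 𝕂) := Metric.ball (0 : 𝕂 × 𝕂) δ ∩ N with hTdef
  have hTo : IsOpen T := Metric.isOpen_ball.inter hN
  have hTmem : ∀ w ∈ T, ‖w‖ < δ := by
    intro w hw
    have h := hw.1
    rwa [Metric.mem_ball, dist_zero_right] at h
  set S1 : Set (𝕂 × 𝕂) := (T ∩ c1 ⁻¹' Vp) ∩ (T ∩ c2 ⁻¹' Vq) with hS1def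
  have hS1o : IsOpen S1 := by
    refine IsOpen.inter ?_ ?_
    · exact ContinuousOn.isOpen_inter_preimage
        (fun w hw => ((hc1an w (hTmem w hw)).continuousAt).continuousWithinAt) hTo hVpo
    · exact ContinuousOn.isOpen_inter_preimage
        (fun w hw => ((hc2an w (hTmem w hw)).continuousAt).continuousWithinAt) hTo hVqo
  have h0T : (0 : 𝕂 × 𝕂) ∈ T := ⟨by simpa using hδpos, h0⟩
  have h0S1 : (0 : 𝕂 × 𝕂) ∈ S1 :=
    ⟨⟨h0T, by rw [Set.mem_preimage, hc10]; exact hVp1⟩,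
     ⟨h0T, by rw [Set.mem_preimage, hc20]; exact hVq1⟩⟩
  have hGan : ∀ w ∈ S1, AnalyticAt 𝕂 G w := by
    intro w hw
    have hw1 : AnalyticAt 𝕂 (fun w : 𝕂 × 𝕂 => w.1 * rp (c1 w)) w :=
      analyticAt_fst.mul ((hrpan _ hw.1.2).comp (hc1an w (hTmem w hw.1.1)))
    have hw2 : AnalyticAt 𝕂 (fun w : 𝕂 × 𝕂 => w.2 * rq (c2 w)) w :=
      analyticAt_snd.mul ((hrqan _ hw.2.2).comp (hc2an w (hTmem w hw.2.1)))
    exact hw1.prod hw2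
  have hG0 : G 0 = 0 := by
    rw [hGdef]
    simp [Prod.ext_iff]
  have hφ0 : rp (c1 0) = 1 := by rw [hc10, hrp1]
  have hψ0 : rq (c2 0) = 1 := by rw [hc20, hrq1]
  have hδ0 : ‖(0 : 𝕂 × 𝕂)‖ < δ := by simpa using hδpos
  have hG'1 : HasFDerivAt (fun w : 𝕂 × 𝕂 => w.1 * rp (c1 w))
      (ContinuousLinearMap.fst 𝕂 𝕂 𝕂) 0 := by
    have hfst : HasFDerivAt (fun w : 𝕂 × 𝕂 => w.1) (ContinuousLinearMap.fst 𝕂 𝕂 𝕂) 0 :=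
      (ContinuousLinearMap.fst 𝕂 𝕂 𝕂).hasFDerivAt
    have hφan : AnalyticAt 𝕂 (fun w => rp (c1 w)) 0 :=
      (hrpan _ (by rw [hc10]; exact hVp1)).comp (hc1an 0 hδ0)
    have hφd := hφan.differentiableAt.hasFDerivAt
    have h := hfst.mul hφd
    refine h.congr_fderiv ?_
    rw [hφ0, one_smul]
    ext x <;> simp
  have hG'2 : HasFDerivAt (fun w : 𝕂 × 𝕂 => w.2 * rq (c2 w))
      (ContinuousLinearMap.snd 𝕂 𝕂 𝕂) 0 := by
    have hsnd : HasFDerivAt (fun w : 𝕂 × 𝕂 => w.2) (ContinuousLinearMap.snd 𝕂 𝕂 𝕂) 0 :=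
      (ContinuousLinearMap.snd 𝕂 𝕂 𝕂).hasFDerivAt
    have hψan : AnalyticAt 𝕂 (fun w => rq (c2 w)) 0 :=
      (hrqan _ (by rw [hc20]; exact hVq1)).comp (hc2an 0 hδ0)
    have hψd := hψan.differentiableAt.hasFDerivAt
    have h := hsnd.mul hψd
    refine h.congr_fderiv ?_
    rw [hψ0, one_smul]
    ext x <;> simp
  have hG' : HasFDerivAt G
      ((ContinuousLinearMap.fst 𝕂 𝕂 𝕂).prod (ContinuousLinearMap.snd 𝕂 𝕂 𝕂)) 0 :=
    hG'1.prodMk hG'2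
  set e : (𝕂 × 𝕂) ≃L[𝕂] (𝕂 × 𝕂) := ContinuousLinearEquiv.refl 𝕂 (𝕂 × 𝕂) with hedef
  have hGe : HasFDerivAt G (e : (𝕂 × 𝕂) →L[𝕂] (𝕂 × 𝕂)) 0 := by
    have heq : (e : (𝕂 × 𝕂) →L[𝕂] (𝕂 × 𝕂))
        = (ContinuousLinearMap.fst 𝕂 𝕂 𝕂).prod (ContinuousLinearMap.snd 𝕂 𝕂 𝕂) := by
      apply ContinuousLinearMap.ext
      intro w
      simp [hedef, ContinuousLinearMap.prod_apply]
    rw [heq]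
    exact hG'
  have hstrict : HasStrictFDerivAt G (e : (𝕂 × 𝕂) →L[𝕂] (𝕂 × 𝕂)) 0 :=
    ((hGan 0 h0S1).contDiffAt (n := 1)).hasStrictFDerivAt' hGe one_ne_zero
  set Φ := hstrict.toOpenPartialHomeomorph G with hΦdef
  have hcoe : ⇑Φ = G := rfl
  have h0src : (0 : 𝕂 × 𝕂) ∈ Φ.source := hstrict.mem_toOpenPartialHomeomorph_source
  have hΦ0 : Φ 0 = 0 := by rw [hcoe, hG0]
  have hsymm0 : AnalyticAt 𝕂 Φ.symm 0 := by
    have h := Φ.analyticAt_symm' (i := e) h0src (by rw [hcoe]; exact hGan 0 h0S1)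
      (by rw [hcoe]; exact hGe.fderiv)
    rwa [hΦ0] at h
  set W' : Set (𝕂 × 𝕂) := Φ.target ∩ {z | AnalyticAt 𝕂 Φ.symm z} with hW'def
  have hW'o : IsOpen W' := Φ.open_target.inter (isOpen_analyticAt 𝕂 _)
  have h0W' : (0 : 𝕂 × 𝕂) ∈ W' := ⟨by rw [← hΦ0]; exact Φ.map_source h0src, hsymm0⟩
  set U : Set (𝕂 × 𝕂) := (Φ.source ∩ Φ ⁻¹' W') ∩ S1 with hUdef
  have hUo : IsOpen U := (Φ.isOpen_inter_preimage hW'o).inter hS1o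
  have h0U : (0 : 𝕂 × 𝕂) ∈ U := ⟨⟨h0src, by rw [Set.mem_preimage, hΦ0]; exact h0W'⟩, h0S1⟩
  have hUsrc : U ⊆ Φ.source := fun w hw => hw.1.1
  have hU'o : IsOpen (Φ '' U) := Φ.isOpen_image_of_subset_source hUo hUsrc
  refine ⟨U, Φ '' U, G, Φ.symm, hUo, hU'o, h0U, ⟨0, h0U, hΦ0⟩, ?_, ?_, ?_, hG0, ?_, ?_, ?_⟩
  · exact fun w hw => hw.2.1.1.2
  · exact fun w hw => hGan w hw.2
  · intro z hz
    obtain ⟨w, hwU, hwz⟩ := hz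
    have hzW : z ∈ W' := by rw [← hwz]; exact hwU.1.2
    exact hzW.2
  · have hinj : Set.InjOn G U := by
      have h := Φ.injOn.mono hUsrc
      rwa [hcoe] at h
    have h := hinj.bijOn_image
    rwa [show G '' U = Φ '' U by rw [hcoe]] at h
  · intro w hw
    have h := Φ.left_inv (hUsrc hw)
    rwa [hcoe] at h
  · intro w hw
    have hw1 : ‖w‖ < δ := hTmem w hw.2.1.1
    have hvw := hid w hw1
    have hrpw : (rp (c1 w)) ^ p = c1 w := hrp _ hw.2.1.2
    have hrqw : (rq (c2 w)) ^ q = c2 w := hrq _ hw.2.2.2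
    show FpqK 𝕂 p q w + v w = (G w).1 ^ p - (G w).2 ^ q
    rw [hGdef]
    simp only
    rw [mul_pow, mul_pow, hrpw, hrqw, hvw, FpqK, hc1def, hc2def]
    simp only
    have hxp : w.1 ^ p * w.1 ^ (2 * q - p) = w.1 ^ (2 * q) := by
      rw [← pow_add]; congr 1; omega
    have hyq : w.2 ^ q * w.2 ^ q = w.2 ^ (2 * q) := by
      rw [← pow_add]; congr 1; omega
    rw [← hxp, ← hyq]
    ring

end
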